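/- Let u be an axisymmetric vector field on Ω with u ∈ C⁰([0,T], C¹(Ω)) (so that u_r/r ∈ L^∞([0,T]×Ω)). Then for every α ∈ ℝ and every solution (x_t, ξ_t, b_t) of the bicharacteristic–amplitude ODE system with (ξ₀)_θ = 0, |ξ₀| = 1, b₀·ξ₀ = 0 and |b₀| = r₀^{−α}, the quantity r_t^α b_t remains bounded on [0,T], uniformly in the initial data; in particular β_{−α}(T) < ∞. -/

import Mathlib

open MeasureTheory Real Filter Topology
open scoped ENNReal RealInnerProductSpace FourierTransform

noncomputable section

abbrev V3 : Type := EuclideanSpace ℝ (Fin 3)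

namespace AxiEuler

/-- The `i`-th standard basis vector of `ℝ³`. -/
def e (i : Fin 3) : V3 := EuclideanSpace.single i 1

/-- Distance to the `z`-axis (the cylindrical radius `r`). -/
def rad (x : V3) : ℝ := Real.sqrt (x 0 ^ 2 + x 1 ^ 2)

/-- Radial unit vector `e_r` at `x` (zero on the axis). -/
def er (x : V3) : V3 := (rad x)⁻¹ • (x 0 • e 0 + x 1 • e 1)

/-- Azimuthal unit vector `e_θ` at `x` (zero on the axis). -/
def eθ (x : V3) : V3 := (rad x)⁻¹ • ((-(x 1)) • e 0 + x 0 • e 1)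

/-- Vertical unit vector `e_z`. -/
def ez : V3 := e 2

/-- Rotation of angle `θ` about the `z`-axis. -/
def rot (θ : ℝ) (x : V3) : V3 :=
  (Real.cos θ * x 0 - Real.sin θ * x 1) • e 0 +
    (Real.sin θ * x 0 + Real.cos θ * x 1) • e 1 + x 2 • e 2

/-- A vector field is axisymmetric if it is equivariant under rotations about the `z`-axis. -/
def AxiSymm (u : V3 → V3) : Prop := ∀ θ x, u (rot θ x) = rot θ (u x)

/-- A set is axisymmetric if it is invariant under rotations about the `z`-axis. -/
def AxiSymmSet (Ω : Set V3) : Prop := ∀ θ x, x ∈ Ω → rot θ x ∈ Ω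

/-- The admissible domains: `ℝ³` itself, or a bounded open set, invariant by rotations
about the `z`-axis. -/
structure GoodDomain (Ω : Set V3) : Prop where
  isOpen : IsOpen Ω
  axi : AxiSymmSet Ω
  univ_or_bounded : Ω = Set.univ ∨ Bornology.IsBounded Ω

/-- Partial derivative `∂ᵢ uⱼ`. -/
def pd (u : V3 → V3) (x : V3) (i j : Fin 3) : ℝ := fderiv ℝ u x (e i) j

/-- Divergence of a vector field on `ℝ³`. -/
def div3 (u : V3 → V3) (x : V3) : ℝ := pd u x 0 0 + pd u x 1 1 + pd u x 2 2

/-- Curl of a vector field on `ℝ³`. -/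
def curl3 (u : V3 → V3) (x : V3) : V3 :=
  (pd u x 1 2 - pd u x 2 1) • e 0 + (pd u x 2 0 - pd u x 0 2) • e 1 +
    (pd u x 0 1 - pd u x 1 0) • e 2

/-- Cylindrical radial component `u_r`. -/
def compR (u : V3 → V3) (x : V3) : ℝ := ⟪u x, er x⟫

/-- Cylindrical azimuthal component `u_θ`. -/
def compθ (u : V3 → V3) (x : V3) : ℝ := ⟪u x, eθ x⟫

/-- Cylindrical vertical component `u_z`. -/
def compZ (u : V3 → V3) (x : V3) : ℝ := ⟪u x, ez⟫

/-- Toroidal part `w_r e_r + w_z e_z` of a vector field. -/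
def toroidal (w : V3 → V3) (x : V3) : V3 := (⟪w x, er x⟫) • er x + (⟪w x, ez⟫) • ez

/-- `ν` is an outward normal vector of `Ω` at the boundary point `x`, in the sense of a
`C¹` local defining function. -/
def IsOuterNormalAt (Ω : Set V3) (x ν : V3) : Prop :=
  x ∈ frontier Ω ∧ ν ≠ 0 ∧
    ∃ f : V3 → ℝ, ContDiffAt ℝ 1 f x ∧ f x = 0 ∧ (∀ᶠ y in nhds x, y ∈ Ω → f y ≤ 0) ∧
      gradient f x = ν

/-- The impermeability boundary condition `w ⬝ n = 0` on `∂Ω`. -/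
def NoFlux (Ω : Set V3) (w : V3 → V3) : Prop :=
  ∀ x ν, IsOuterNormalAt Ω x ν → ⟪w x, ν⟫ = 0

/-- The incompressible Euler equations on `(0,T) × Ω` with pressure `P` and
impermeable boundary condition. -/
def EulerEq (Ω : Set V3) (T : ℝ) (u : ℝ → V3 → V3) (P : ℝ → V3 → ℝ) : Prop :=
  ∀ t ∈ Set.Ioo 0 T,
    (∀ x ∈ Ω,
      deriv (fun s => u s x) t + fderiv ℝ (u t) x (u t x) + gradient (P t) x = 0 ∧
        div3 (u t) x = 0) ∧
      NoFlux Ω (u t)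

/-- The Euler equations linearized about `u`, with pressure `Q` and forcing `f`. -/
def LinEulerFEq (Ω : Set V3) (T : ℝ) (u v : ℝ → V3 → V3) (Q : ℝ → V3 → ℝ)
    (f : ℝ → V3 → V3) : Prop :=
  ∀ t ∈ Set.Ioo 0 T,
    (∀ x ∈ Ω,
      deriv (fun s => v s x) t + fderiv ℝ (v t) x (u t x) + fderiv ℝ (u t) x (v t x) +
          gradient (Q t) x = f t x ∧
        div3 (v t) x = 0) ∧
      NoFlux Ω (v t)

/-- The Euler equations linearized about `u` (no forcing). -/
def LinEulerEq (Ω : Set V3) (T : ℝ) (u v : ℝ → V3 → V3) (Q : ℝ → V3 → ℝ) : Prop :=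
  LinEulerFEq Ω T u v Q (fun _ _ => 0)

/-- Complexification of a vector of `ℝ³`. -/
def toC (v : V3) : EuclideanSpace ℂ (Fin 3) :=
  (WithLp.equiv 2 (Fin 3 → ℂ)).symm fun i => (v i : ℂ)

/-- Bessel-potential `Hˢ` norm of a vector field on all of `ℝ³`, via the Fourier transform. -/
def sobNorm (s : ℝ) (f : V3 → V3) : ℝ≥0∞ :=
  eLpNorm (fun ξ : V3 => ((1 + ‖ξ‖ ^ 2) ^ (s / 2)) • (𝓕 (fun x => toC (f x)) ξ)) 2 volume

/-- `Hˢ(Ω)` norm, defined by infimum over all extensions to `ℝ³`. -/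
def HsNorm (s : ℝ) (Ω : Set V3) (f : V3 → V3) : ℝ≥0∞ :=
  ⨅ (g : V3 → V3) (_ : Set.EqOn g f Ω), sobNorm s g

/-- Membership in `Hˢ(Ω)`. -/
def MemHs (s : ℝ) (Ω : Set V3) (f : V3 → V3) : Prop := HsNorm s Ω f < ⊤

/-- `u ∈ C⁰(I, Hˢ(Ω))`. -/
def ContHsOn (s : ℝ) (I : Set ℝ) (Ω : Set V3) (u : ℝ → V3 → V3) : Prop :=
  (∀ t ∈ I, MemHs s Ω (u t)) ∧
    ∀ t ∈ I, Tendsto (fun t' => HsNorm s Ω (fun x => u t' x - u t x)) (𝓝[I] t) (𝓝 0)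

/-- `u ∈ C¹(I, Hˢ(Ω))`: there is a time derivative `u'` in `C⁰(I, Hˢ(Ω))`, the difference
quotients converging in `Hˢ(Ω)`. -/
def C1HsOn (s : ℝ) (I : Set ℝ) (Ω : Set V3) (u : ℝ → V3 → V3) : Prop :=
  ∃ u' : ℝ → V3 → V3, ContHsOn s I Ω u' ∧ ∀ t ∈ I,
    Tendsto (fun t' => HsNorm s Ω (fun x => (t' - t)⁻¹ • (u t' x - u t x) - u' t x))
      (𝓝[I \ {t}] t) (𝓝 0)

/-- Hypothesis (H1): `u ∈ C⁰([0,T), Hˢ(Ω)) ∩ C¹([0,T), H^{s-1}(Ω))`. -/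
def RegH1 (s T : ℝ) (Ω : Set V3) (u : ℝ → V3 → V3) : Prop :=
  ContHsOn s (Set.Ico 0 T) Ω u ∧ C1HsOn (s - 1) (Set.Ico 0 T) Ω u

/-- Closed interval variant: `u ∈ C⁰([0,T], Hˢ(Ω)) ∩ C¹([0,T], H^{s-1}(Ω))`. -/
def RegH1c (s T : ℝ) (Ω : Set V3) (u : ℝ → V3 → V3) : Prop :=
  ContHsOn s (Set.Icc 0 T) Ω u ∧ C1HsOn (s - 1) (Set.Icc 0 T) Ω u

/-- Weighted norm `‖r^α v‖_{L^p(Ω)}` for a vector field `v`. -/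
def wLp (α : ℝ) (p : ℝ≥0∞) (Ω : Set V3) (v : V3 → V3) : ℝ≥0∞ :=
  eLpNorm (fun x => (rad x ^ α) • v x) p (volume.restrict Ω)

/-- Weighted norm `‖r^α f‖_{L^p(Ω)}` for a scalar function `f`. -/
def wLpS (α : ℝ) (p : ℝ≥0∞) (Ω : Set V3) (f : V3 → ℝ) : ℝ≥0∞ :=
  eLpNorm (fun x => (rad x ^ α) * f x) p (volume.restrict Ω)

/-- `v` is an axisymmetric solution of the linearized Euler equations on `(0,T) × Ω`
with initial datum in `H¹`. -/
def IsLinSol (Ω : Set V3) (T : ℝ) (u v : ℝ → V3 → V3) : Prop :=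
  (∃ Q, LinEulerEq Ω T u v Q) ∧ ContHsOn 1 (Set.Ico 0 T) Ω v ∧ AxiSymm (v 0)

/-- The weighted growth bound `λ_{p,σ}(t)` of the linearized Euler semigroup. -/
def lambda (Ω : Set V3) (T : ℝ) (u : ℝ → V3 → V3) (p : ℝ≥0∞) (σ : ℝ) (t : ℝ) : ℝ≥0∞ :=
  ⨆ (v : ℝ → V3 → V3) (_ : IsLinSol Ω T u v),
    wLp (-σ) p Ω (v t) / wLp (-σ) p Ω (v 0)

/-- The bicharacteristic–amplitude ODE system along the flow of `u`, on `[0,T]`: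
`ẋ = u(t,x)`, `ξ̇ = -(∇u)ᵀ ξ`, `ḃ = -b·∇u + 2 (b·∇u·ξ/|ξ|²) ξ`. -/
def Bichar (u : ℝ → V3 → V3) (x ξ b : ℝ → V3) (T : ℝ) : Prop :=
  ∀ t ∈ Set.Icc 0 T,
    HasDerivAt x (u t (x t)) t ∧
    HasDerivAt ξ (-(ContinuousLinearMap.adjoint (fderiv ℝ (u t) (x t)) (ξ t))) t ∧
    HasDerivAt b (-(fderiv ℝ (u t) (x t) (b t)) +
      (2 * ⟪fderiv ℝ (u t) (x t) (b t), ξ t⟫ / ‖ξ t‖ ^ 2) • ξ t) t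

/-- The fluid Lyapunov-type quantity `β_σ(t)`: supremum of `r_t^{-σ} |b_t|` over all
solutions of the bicharacteristic–amplitude system with admissible initial data. -/
def beta (Ω : Set V3) (u : ℝ → V3 → V3) (σ : ℝ) (t : ℝ) : ℝ≥0∞ :=
  ⨆ (s : (ℝ → V3) × (ℝ → V3) × (ℝ → V3)) (_ :
      Bichar u s.1 s.2.1 s.2.2 t ∧ s.1 0 ∈ Ω ∧
        ⟪s.2.1 0, eθ (s.1 0)⟫ = 0 ∧ ‖s.2.1 0‖ = 1 ∧
        ⟪s.2.2 0, s.2.1 0⟫ = 0 ∧ ‖s.2.2 0‖ = rad (s.1 0) ^ σ),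
    ENNReal.ofReal (rad (s.1 t) ^ (-σ) * ‖s.2.2 t‖)

/-- `u` extends beyond time `T` as a solution with (H1) regularity. -/
def ExtendsBeyond (s : ℝ) (Ω : Set V3) (u : ℝ → V3 → V3) (T : ℝ) : Prop :=
  ∃ T' > T, ∃ u' : ℝ → V3 → V3, ∃ P' : ℝ → V3 → ℝ,
    (∀ t ∈ Set.Ico (0 : ℝ) T, ∀ x ∈ Ω, u' t x = u t x) ∧
      EulerEq Ω T' u' P' ∧ RegH1 s T' Ω u'

/-- Squared Frobenius norm of the Jacobian matrix of `u`. -/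
def frob2 (u : V3 → V3) (x : V3) : ℝ := ∑ i : Fin 3, ∑ j : Fin 3, (pd u x i j) ^ 2

/-- Second partial derivative `∂ₖ ∂ᵢ uⱼ`. -/
def pd2 (u : V3 → V3) (x : V3) (k i j : Fin 3) : ℝ := fderiv ℝ (fun y => pd u y i j) x (e k)

/-- Squared Frobenius norm of the Hessian of `u`. -/
def frobH2 (u : V3 → V3) (x : V3) : ℝ :=
  ∑ k : Fin 3, ∑ i : Fin 3, ∑ j : Fin 3, (pd2 u x k i j) ^ 2


namespace BetaAux

lemma e_apply (i j : Fin 3) : e i j = if j = i then 1 else 0 := by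
  simp [e, EuclideanSpace.single_apply]

lemma comp_le_norm (y : V3) (i : Fin 3) : |y i| ≤ ‖y‖ := by
  rw [EuclideanSpace.norm_eq, ← Real.sqrt_sq_eq_abs]
  apply Real.sqrt_le_sqrt
  have := Finset.single_le_sum (f := fun j => ‖y j‖ ^ 2) (fun j _ => sq_nonneg _)
    (Finset.mem_univ i)
  simpa using this

lemma u_axis (u : V3 → V3) (hax : AxiSymm u) (p : V3) (h0 : p 0 = 0) (h1 : p 1 = 0) :
    u p 0 = 0 ∧ u p 1 = 0 := by
  have hp : rot π p = p := by
    ext j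
    fin_cases j <;>
      simp [rot, e_apply, PiLp.add_apply, PiLp.smul_apply, h0, h1]
  have h := hax π p
  rw [hp] at h
  constructor
  · have := congrArg (fun v : V3 => v 0) h
    simp only [rot, e_apply, PiLp.add_apply, PiLp.smul_apply] at this
    simp at this
    linarith
  · have := congrArg (fun v : V3 => v 1) h
    simp only [rot, e_apply, PiLp.add_apply, PiLp.smul_apply] at this
    simp at this
    linarith

lemma key (u : V3 → V3) (hC : ContDiff ℝ 1 u) (hax : AxiSymm u) (M : ℝ)
    (hM : ∀ y, ‖fderiv ℝ u y‖ ≤ M) (x : V3) :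
    |x 0 * u x 0 + x 1 * u x 1| ≤ 2 * M * (x 0 ^ 2 + x 1 ^ 2) := by
  have hMnn : 0 ≤ M := le_trans (norm_nonneg _) (hM 0)
  set p : V3 := x - x 0 • e 0 - x 1 • e 1 with hpdef
  have hp0 : p 0 = 0 := by simp [hpdef, e_apply, PiLp.sub_apply, PiLp.smul_apply]
  have hp1 : p 1 = 0 := by simp [hpdef, e_apply, PiLp.sub_apply, PiLp.smul_apply]
  obtain ⟨hu0, hu1⟩ := u_axis u hax p hp0 hp1
  set r : ℝ := Real.sqrt (x 0 ^ 2 + x 1 ^ 2) with hrdef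
  have hrnn : 0 ≤ r := Real.sqrt_nonneg _
  have hxp : ‖x - p‖ = r := by
    have hx : x - p = x 0 • e 0 + x 1 • e 1 := by
      simp [hpdef]; abel
    rw [hx, EuclideanSpace.norm_eq, hrdef]
    congr 1
    rw [Fin.sum_univ_three]
    simp [e_apply, PiLp.add_apply, PiLp.smul_apply, sq_abs]
  have hmv : ‖u x - u p‖ ≤ M * r := by
    have := Convex.norm_image_sub_le_of_norm_fderiv_le (f := u)
      (fun y _ => (hC.differentiable one_ne_zero) y)
      (fun y _ => hM y) convex_univ (Set.mem_univ p) (Set.mem_univ x)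
    rwa [hxp] at this
  have h0 : |x 0| ≤ r := by
    rw [hrdef, ← Real.sqrt_sq_eq_abs]
    exact Real.sqrt_le_sqrt (by nlinarith [sq_nonneg (x 1)])
  have h1 : |x 1| ≤ r := by
    rw [hrdef, ← Real.sqrt_sq_eq_abs]
    exact Real.sqrt_le_sqrt (by nlinarith [sq_nonneg (x 0)])
  have hd0 : |u x 0| ≤ M * r := by
    have h := comp_le_norm (u x - u p) 0
    simp only [PiLp.sub_apply, hu0, sub_zero] at h
    exact h.trans hmv
  have hd1 : |u x 1| ≤ M * r := by
    have h := comp_le_norm (u x - u p) 1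
    simp only [PiLp.sub_apply, hu1, sub_zero] at h
    exact h.trans hmv
  have hr2 : r ^ 2 = x 0 ^ 2 + x 1 ^ 2 := Real.sq_sqrt (by positivity)
  calc |x 0 * u x 0 + x 1 * u x 1| ≤ |x 0| * |u x 0| + |x 1| * |u x 1| := by
        calc _ ≤ |x 0 * u x 0| + |x 1 * u x 1| := abs_add_le _ _
        _ = _ := by rw [abs_mul, abs_mul]
    _ ≤ r * (M * r) + r * (M * r) := by
        have := abs_nonneg (u x 0); have := abs_nonneg (u x 1)
        have := abs_nonneg (x 0); have := abs_nonneg (x 1)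
        nlinarith
    _ = 2 * M * (x 0 ^ 2 + x 1 ^ 2) := by rw [← hr2]; ring

end BetaAux

/-- **Finiteness of `β_{-α}(T)`**: for an axisymmetric field `u ∈ C⁰([0,T],C¹)` with
bounded gradient, `r_t^α b_t` remains bounded on `[0,T]`, uniformly over admissible
initial data; in particular `β_{-α}(T) < ∞`. -/
theorem beta_finite
    (Ω : Set V3) (hΩ : GoodDomain Ω) (T : ℝ) (hT : 0 < T)
    (u : ℝ → V3 → V3) (hax : ∀ t, AxiSymm (u t))
    (hu : ∀ t ∈ Set.Icc 0 T, ContDiff ℝ 1 (u t))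
    (hbd : ∃ M : ℝ, ∀ t ∈ Set.Icc 0 T, ∀ x : V3, ‖fderiv ℝ (u t) x‖ ≤ M)
    (α : ℝ) :
    (∃ M : ℝ, ∀ x ξ b : ℝ → V3, Bichar u x ξ b T → x 0 ∈ Ω →
      ⟪ξ 0, eθ (x 0)⟫ = 0 → ‖ξ 0‖ = 1 → ⟪b 0, ξ 0⟫ = 0 → ‖b 0‖ = rad (x 0) ^ (-α) →
      ∀ t ∈ Set.Icc 0 T, rad (x t) ^ α * ‖b t‖ ≤ M) ∧
    beta Ω u (-α) T < ⊤ := by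
  classical
  obtain ⟨M₁, hM₁⟩ := hbd
  set M0 : ℝ := max M₁ 0 with hM0def
  have hM0 : 0 ≤ M0 := le_max_right _ _
  have hbd' : ∀ t ∈ Set.Icc (0:ℝ) T, ∀ y : V3, ‖fderiv ℝ (u t) y‖ ≤ M0 :=
    fun t ht y => (hM₁ t ht y).trans (le_max_left _ _)
  set Mfin : ℝ := Real.exp (3 * M0 * T) * Real.exp (2 * |α| * M0 * T) with hMfin
  have hexp3nn : (0:ℝ) ≤ Real.exp (3 * M0 * T) := (Real.exp_pos _).le
  have hexpαone : (1:ℝ) ≤ Real.exp (2 * |α| * M0 * T) :=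
    Real.one_le_exp (by positivity)
  have main : ∀ x ξ b : ℝ → V3, Bichar u x ξ b T → x 0 ∈ Ω →
      ⟪ξ 0, eθ (x 0)⟫ = 0 → ‖ξ 0‖ = 1 → ⟪b 0, ξ 0⟫ = 0 → ‖b 0‖ = rad (x 0) ^ (-α) →
      ∀ t ∈ Set.Icc 0 T, rad (x t) ^ α * ‖b t‖ ≤ Mfin := by
    intro x ξ b hbi hx0 hξθ hξn hbperp hbn t ht
    -- Bound on ‖b t‖ by Gronwall
    have hbODE : ∀ s ∈ Set.Icc (0:ℝ) T, HasDerivAt b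
        (-(fderiv ℝ (u s) (x s) (b s)) +
          (2 * ⟪fderiv ℝ (u s) (x s) (b s), ξ s⟫ / ‖ξ s‖ ^ 2) • ξ s) s :=
      fun s hs => (hbi s hs).2.2
    have hbbound : ∀ s ∈ Set.Icc (0:ℝ) T,
        ‖(-(fderiv ℝ (u s) (x s) (b s)) +
          (2 * ⟪fderiv ℝ (u s) (x s) (b s), ξ s⟫ / ‖ξ s‖ ^ 2) • ξ s)‖
          ≤ 3 * M0 * ‖b s‖ + 0 := by
      intro s hs
      set A := fderiv ℝ (u s) (x s) with hA
      have hAb : ‖A (b s)‖ ≤ M0 * ‖b s‖ :=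
        (A.le_opNorm _).trans (mul_le_mul_of_nonneg_right (hbd' s hs _) (norm_nonneg _))
      have hsmul : ‖(2 * ⟪A (b s), ξ s⟫ / ‖ξ s‖ ^ 2) • ξ s‖ ≤ 2 * M0 * ‖b s‖ := by
        rcases eq_or_ne (ξ s) 0 with hz | hz
        · simp [hz]
          positivity
        · have hξpos : 0 < ‖ξ s‖ := norm_pos_iff.mpr hz
          have hI : |⟪A (b s), ξ s⟫| ≤ M0 * ‖b s‖ * ‖ξ s‖ :=
            (abs_real_inner_le_norm _ _).trans
              (mul_le_mul_of_nonneg_right hAb (norm_nonneg _))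
          rw [norm_smul, Real.norm_eq_abs, abs_div, abs_mul, abs_two,
            abs_of_nonneg (sq_nonneg (‖ξ s‖)), div_mul_eq_mul_div, div_le_iff₀ (by positivity)]
          nlinarith
      calc ‖(-(A (b s)) + (2 * ⟪A (b s), ξ s⟫ / ‖ξ s‖ ^ 2) • ξ s)‖
          ≤ ‖-(A (b s))‖ + ‖(2 * ⟪A (b s), ξ s⟫ / ‖ξ s‖ ^ 2) • ξ s‖ := norm_add_le _ _
        _ ≤ M0 * ‖b s‖ + 2 * M0 * ‖b s‖ := by rw [norm_neg]; exact add_le_add hAb hsmul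
        _ = 3 * M0 * ‖b s‖ + 0 := by ring
    have hbgron := norm_le_gronwallBound_of_norm_deriv_right_le
      (f := b) (δ := ‖b 0‖) (K := 3 * M0) (ε := 0) (a := 0) (b := T)
      (fun s hs => (hbODE s hs).continuousAt.continuousWithinAt)
      (fun s hs => (hbODE s (Set.Ico_subset_Icc_self hs)).hasDerivWithinAt)
      le_rfl (fun s hs => hbbound s (Set.Ico_subset_Icc_self hs))
    have hbt : ‖b t‖ ≤ ‖b 0‖ * Real.exp (3 * M0 * T) := by
      have h1 := hbgron t ht
      rw [gronwallBound_ε0] at h1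
      refine h1.trans ?_
      have : Real.exp (3 * M0 * (t - 0)) ≤ Real.exp (3 * M0 * T) :=
        Real.exp_le_exp.mpr (by nlinarith [ht.1, ht.2])
      exact mul_le_mul_of_nonneg_left this (norm_nonneg _)
    -- Radial bounds via Gronwall on h = r²
    set h : ℝ → ℝ := fun s => (x s 0) ^ 2 + (x s 1) ^ 2 with hhdef
    have hhnn : ∀ s, 0 ≤ h s := fun s => by positivity
    set h' : ℝ → ℝ := fun s => 2 * (x s 0) * (u s (x s) 0) + 2 * (x s 1) * (u s (x s) 1)
      with hh'def
    have hxi : ∀ (i : Fin 3), ∀ s ∈ Set.Icc (0:ℝ) T,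
        HasDerivAt (fun τ => x τ i) (u s (x s) i) s := by
      intro i s hs
      have hx := (hbi s hs).1
      have := (EuclideanSpace.proj (𝕜 := ℝ) i).hasFDerivAt.comp_hasDerivAt s hx
      simpa [Function.comp_def] using this
    have hhderiv : ∀ s ∈ Set.Icc (0:ℝ) T, HasDerivAt h (h' s) s := by
      intro s hs
      have h0 := ((hxi 0 s hs).pow 2).add ((hxi 1 s hs).pow 2)
      convert h0 using 1
      show 2 * x s 0 * u s (x s) 0 + 2 * x s 1 * u s (x s) 1
        = (2:ℕ) * x s 0 ^ (2-1) * u s (x s) 0 + (2:ℕ) * x s 1 ^ (2-1) * u s (x s) 1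
      push_cast
      ring
      all_goals rfl
    have hh'bound : ∀ s ∈ Set.Icc (0:ℝ) T, ‖h' s‖ ≤ 4 * M0 * ‖h s‖ + 0 := by
      intro s hs
      have hk := BetaAux.key (u s) (hu s hs) (hax s) M0 (hbd' s hs) (x s)
      rw [Real.norm_eq_abs, Real.norm_eq_abs, abs_of_nonneg (hhnn s), add_zero]
      have habs : |h' s| = 2 * |x s 0 * u s (x s) 0 + x s 1 * u s (x s) 1| := by
        show |2 * x s 0 * u s (x s) 0 + 2 * x s 1 * u s (x s) 1| = _
        rw [show 2 * (x s 0) * (u s (x s) 0) + 2 * (x s 1) * (u s (x s) 1)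
          = 2 * (x s 0 * u s (x s) 0 + x s 1 * u s (x s) 1) by ring, abs_mul, abs_two]
      rw [habs]
      show _ ≤ 4 * M0 * (x s 0 ^ 2 + x s 1 ^ 2)
      nlinarith
    have hfwd : ∀ s ∈ Set.Icc (0:ℝ) T, h s ≤ h 0 * Real.exp (4 * M0 * s) := by
      intro s hs
      have hg := norm_le_gronwallBound_of_norm_deriv_right_le
        (f := h) (f' := h') (δ := h 0) (K := 4 * M0) (ε := 0) (a := 0) (b := T)
        (fun τ hτ => (hhderiv τ hτ).continuousAt.continuousWithinAt)
        (fun τ hτ => (hhderiv τ (Set.Ico_subset_Icc_self hτ)).hasDerivWithinAt)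
        (by rw [Real.norm_eq_abs, abs_of_nonneg (hhnn 0)])
        (fun τ hτ => hh'bound τ (Set.Ico_subset_Icc_self hτ)) s hs
      rw [gronwallBound_ε0, Real.norm_eq_abs, abs_of_nonneg (hhnn s)] at hg
      simpa using hg
    have hbwd : h 0 ≤ h t * Real.exp (4 * M0 * t) := by
      have hmem : ∀ s ∈ Set.Icc (0:ℝ) t, t - s ∈ Set.Icc (0:ℝ) T :=
        fun s hs => ⟨by linarith [hs.2], by linarith [hs.1, ht.2]⟩
      have hk : ∀ s ∈ Set.Icc (0:ℝ) t,
          HasDerivAt (fun τ => h (t - τ)) (h' (t - s) * (-1)) s := by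
        intro s hs
        exact HasDerivAt.comp s (hhderiv (t - s) (hmem s hs))
          ((hasDerivAt_id s).const_sub t)
      have hg := norm_le_gronwallBound_of_norm_deriv_right_le
        (f := fun τ => h (t - τ)) (f' := fun τ => h' (t - τ) * (-1))
        (δ := h t) (K := 4 * M0) (ε := 0) (a := 0) (b := t)
        (fun τ hτ => (hk τ hτ).continuousAt.continuousWithinAt)
        (fun τ hτ => (hk τ (Set.Ico_subset_Icc_self hτ)).hasDerivWithinAt)
        (by show ‖h (t - 0)‖ ≤ h t
            rw [sub_zero, Real.norm_eq_abs, abs_of_nonneg (hhnn t)])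
        (fun τ hτ => by
          have := hh'bound (t - τ) (hmem τ (Set.Ico_subset_Icc_self hτ))
          simpa [abs_mul] using this)
        t ⟨ht.1, le_rfl⟩
      rw [gronwallBound_ε0] at hg
      have hval : ‖(fun τ => h (t - τ)) t‖ = h 0 := by
        simp [Real.norm_eq_abs, abs_of_nonneg (hhnn 0)]
      rw [hval] at hg
      simpa using hg
    -- translate to rad
    have hradh : ∀ s, rad (x s) = Real.sqrt (h s) := fun s => rfl
    have hradsq : ∀ s, rad (x s) ^ 2 = h s := fun s => Real.sq_sqrt (hhnn s)
    set E : ℝ := Real.exp (2 * M0 * T) with hEdef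
    have hEpos : 0 < E := Real.exp_pos _
    have hE2 : E ^ 2 = Real.exp (4 * M0 * T) := by
      rw [hEdef, sq, ← Real.exp_add]; ring_nf
    have hrt_le : rad (x t) ≤ rad (x 0) * E := by
      have h1 : h t ≤ h 0 * E ^ 2 := by
        refine (hfwd t ht).trans ?_
        rw [hE2]
        exact mul_le_mul_of_nonneg_left
          (Real.exp_le_exp.mpr (by nlinarith [ht.1, ht.2])) (hhnn 0)
      calc rad (x t) = Real.sqrt (h t) := hradh t
        _ ≤ Real.sqrt (h 0 * E ^ 2) := Real.sqrt_le_sqrt h1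
        _ = Real.sqrt (h 0) * E := by
            rw [Real.sqrt_mul (hhnn 0), Real.sqrt_sq hEpos.le]
        _ = rad (x 0) * E := by rw [← hradh]
    have hr0_le : rad (x 0) ≤ rad (x t) * E := by
      have h1 : h 0 ≤ h t * E ^ 2 := by
        refine hbwd.trans ?_
        rw [hE2]
        exact mul_le_mul_of_nonneg_left
          (Real.exp_le_exp.mpr (by nlinarith [ht.1, ht.2])) (hhnn t)
      calc rad (x 0) = Real.sqrt (h 0) := hradh 0
        _ ≤ Real.sqrt (h t * E ^ 2) := Real.sqrt_le_sqrt h1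
        _ = Real.sqrt (h t) * E := by
            rw [Real.sqrt_mul (hhnn t), Real.sqrt_sq hEpos.le]
        _ = rad (x t) * E := by rw [← hradh]
    -- combine
    have hr0nn : 0 ≤ rad (x 0) := Real.sqrt_nonneg _
    have hrtnn : 0 ≤ rad (x t) := Real.sqrt_nonneg _
    rcases eq_or_ne (rad (x 0)) 0 with hr0 | hr0
    · have hrt0 : rad (x t) = 0 := le_antisymm (by rw [hr0] at hrt_le; linarith) hrtnn
      rcases eq_or_ne α 0 with hα | hα
      · subst hα
        rw [Real.rpow_zero, one_mul]
        have hb0 : ‖b 0‖ = 1 := by rw [hbn, neg_zero, Real.rpow_zero]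
        rw [hb0, one_mul] at hbt
        refine hbt.trans ?_
        nlinarith [Real.exp_pos (3 * M0 * T)]
      · rw [hrt0, Real.zero_rpow hα, zero_mul]
        positivity
    · have hr0pos : 0 < rad (x 0) := lt_of_le_of_ne hr0nn (Ne.symm hr0)
      have hrtpos : 0 < rad (x t) := by nlinarith
      have hratio : rad (x t) ^ α * rad (x 0) ^ (-α)
          ≤ Real.exp (2 * |α| * M0 * T) := by
        have heq : rad (x t) ^ α * rad (x 0) ^ (-α) = (rad (x t) / rad (x 0)) ^ α := by
          rw [Real.div_rpow hrtnn hr0nn, Real.rpow_neg hr0nn, div_eq_mul_inv]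
        rw [heq]
        rcases le_or_gt 0 α with hα | hα
        · have hle : rad (x t) / rad (x 0) ≤ E := by
            rw [div_le_iff₀ hr0pos]; linarith [hrt_le]
          calc (rad (x t) / rad (x 0)) ^ α ≤ E ^ α :=
              Real.rpow_le_rpow (by positivity) hle hα
            _ = Real.exp (2 * M0 * T * α) := by rw [hEdef, ← Real.exp_mul]
            _ = Real.exp (2 * |α| * M0 * T) := by
                rw [abs_of_nonneg hα]; ring_nf
        · have hge : Real.exp (-(2 * M0 * T)) ≤ rad (x t) / rad (x 0) := by
            rw [Real.exp_neg, ← hEdef, le_div_iff₀ hr0pos, inv_mul_eq_div,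
              div_le_iff₀ hEpos]
            linarith [hr0_le]
          calc (rad (x t) / rad (x 0)) ^ α ≤ (Real.exp (-(2 * M0 * T))) ^ α :=
              Real.rpow_le_rpow_of_nonpos (Real.exp_pos _) hge hα.le
            _ = Real.exp (-(2 * M0 * T) * α) := by rw [← Real.exp_mul]
            _ = Real.exp (2 * |α| * M0 * T) := by
                rw [abs_of_neg hα]; ring_nf
      have hrpnn : 0 ≤ rad (x t) ^ α := Real.rpow_nonneg hrtnn _
      calc rad (x t) ^ α * ‖b t‖
          ≤ rad (x t) ^ α * (rad (x 0) ^ (-α) * Real.exp (3 * M0 * T)) := by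
            apply mul_le_mul_of_nonneg_left _ hrpnn
            rw [← hbn]; exact hbt
        _ = (rad (x t) ^ α * rad (x 0) ^ (-α)) * Real.exp (3 * M0 * T) := by ring
        _ ≤ Real.exp (2 * |α| * M0 * T) * Real.exp (3 * M0 * T) := by
            exact mul_le_mul_of_nonneg_right hratio hexp3nn
        _ = Mfin := by rw [hMfin]; ring
  refine ⟨⟨Mfin, main⟩, ?_⟩
  have hle : beta Ω u (-α) T ≤ ENNReal.ofReal Mfin := by
    refine iSup_le fun s => iSup_le fun hs => ?_
    obtain ⟨hbi, hx0, hξθ, hξn, hbperp, hbn⟩ := hs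
    rw [neg_neg]
    exact ENNReal.ofReal_le_ofReal
      (main s.1 s.2.1 s.2.2 hbi hx0 hξθ hξn hbperp hbn T ⟨hT.le, le_rfl⟩)
  exact lt_of_le_of_lt hle ENNReal.ofReal_lt_top


end AxiEuler
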